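/- arXiv:1307.4470 — 3 statements merged into one kernel-verified Lean document; each statement's English description precedes it below -/
import Mathlib

section
/- For every HyLTL formula φ over A and FC and every hybrid trace α over A and X: α,1 ⊨ φ if and only if Σ(α),1 ⊨ γ(φ). -/
/-! ## Valus, trajectories and flow constraints -/

/-- A valuation over the variables `X`. -/
abbrev Valu (X : Type) := X → ℝ

/-- A flow constraint over `X`: a set of pairs (value, derivative) of valuations. -/
abbrev FlowConstraint (X : Type) := Set (Valu X × Valu X)

/-- A trajectory over `X`: a nonnegative duration together with a map `ℝ → Valu X`
(only its values on `[0, dur]` matter). -/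
structure Traj (X : Type) where
  dur : ℝ
  dur_nonneg : 0 ≤ dur
  f : ℝ → Valu X

namespace Traj

variable {X : Type}

/-- A trajectory satisfies a flow constraint iff at every time of its domain the pair
(value, derivative) belongs to the constraint. -/
def sat (τ : Traj X) (C : FlowConstraint X) : Prop :=
  ∀ t ∈ Set.Icc (0 : ℝ) τ.dur,
    (τ.f t, fun x => deriv (fun s => τ.f s x) t) ∈ C

def firstState (τ : Traj X) : Valu X := τ.f 0

def lastState (τ : Traj X) : Valu X := τ.f τ.dur

/-- Identification of trajectories: same duration and same values on the domain. -/
def Equiv (τ τ' : Traj X) : Prop :=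
  τ.dur = τ'.dur ∧ ∀ t ∈ Set.Icc (0 : ℝ) τ.dur, τ.f t = τ'.f t

/-- The restriction `τ↾[t,t']` of a trajectory. -/
def restrict (τ : Traj X) (t t' : ℝ) (h : t ≤ t') : Traj X :=
  ⟨t' - t, sub_nonneg.mpr h, fun s => τ.f (s + t)⟩

/-- Concatenation of two trajectories. -/
noncomputable def concat (τ₁ τ₂ : Traj X) : Traj X :=
  ⟨τ₁.dur + τ₂.dur, add_nonneg τ₁.dur_nonneg τ₂.dur_nonneg,
   fun s => if s ≤ τ₁.dur then τ₁.f s else τ₂.f (s - τ₁.dur)⟩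

end Traj

/-! ## Hybrid traces -/

/-- A hybrid trace `τ₁ a₁ τ₂ a₂ …` over `A` and `X`, 0-indexed:
`traj n` is `τ_{n+1}` and `act n` is `a_{n+1}`. -/
structure HybridTrace (X A : Type) where
  traj : ℕ → Traj X
  act : ℕ → A

/-- Concatenation `g m · g (m+1) · ⋯ · g n` of a segment of trajectories. -/
noncomputable def concatSeg {X : Type} (g : ℕ → Traj X) (m n : ℕ) : Traj X :=
  ((List.range (n - m)).map (fun i => g (m + 1 + i))).foldl Traj.concat (g m)

/-- A hybrid trace over `A ∪ {T}` (with `T = none`) has infinitely many actions in `A`. -/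
def HybridTrace.InfA {X A : Type} (β : HybridTrace X (Option A)) : Prop :=
  ∀ N, ∃ n, N ≤ n ∧ (β.act n).isSome

/-- The restriction `β↾A` of a hybrid trace over `A ∪ {T}` (with `T = none`) to `A`:
delete the occurrences of `T` and concatenate the adjacent trajectories.  (It is
intended to be applied to traces having infinitely many actions in `A`.) -/
noncomputable def HybridTrace.restrictA {X A : Type} [Inhabited A]
    (β : HybridTrace X (Option A)) : HybridTrace X A :=
  letI k : ℕ → ℕ := Nat.nth (fun n => (β.act n).isSome)
  { traj := fun i =>
      match i with
      | 0 => concatSeg β.traj 0 (k 0)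
      | i + 1 => concatSeg β.traj (k i + 1) (k (i + 1))
    act := fun i => (β.act (k i)).getD default }

/-- Identification of hybrid traces (pointwise identification of trajectories). -/
def HybridTrace.Equiv {X A : Type} (α α' : HybridTrace X A) : Prop :=
  (∀ i, (α.traj i).Equiv (α'.traj i)) ∧ ∀ i, α.act i = α'.act i

/-! ## HyLTL syntax and semantics -/

/-- HyLTL formulas over actions `A` and flow-constraint atoms `F`. -/
inductive HyLTL (A F : Type) : Type where
  | flow : F → HyLTL A F
  | act : A → HyLTL A F
  | not : HyLTL A F → HyLTL A F
  | and : HyLTL A F → HyLTL A F → HyLTL A F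
  | or : HyLTL A F → HyLTL A F → HyLTL A F
  | next : HyLTL A F → HyLTL A F
  | untl : HyLTL A F → HyLTL A F → HyLTL A F
  | rel : HyLTL A F → HyLTL A F → HyLTL A F

/-- Satisfaction of a HyLTL formula by a hybrid trace at a (0-indexed) position;
`I` interprets flow-constraint atoms.  Position `i` here is position `i+1` of the paper. -/
def HyLTL.Sat {X A F : Type} (I : F → FlowConstraint X) (α : HybridTrace X A) :
    HyLTL A F → ℕ → Prop
  | .flow f, i => (α.traj i).sat (I f)
  | .act a, i => 0 < i ∧ α.act (i - 1) = a
  | .not φ, i => ¬ HyLTL.Sat I α φ i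
  | .and φ ψ, i => HyLTL.Sat I α φ i ∧ HyLTL.Sat I α ψ i
  | .or φ ψ, i => HyLTL.Sat I α φ i ∨ HyLTL.Sat I α ψ i
  | .next φ, i => HyLTL.Sat I α φ (i + 1)
  | .untl φ ψ, i =>
      ∃ j, i ≤ j ∧ HyLTL.Sat I α ψ j ∧ ∀ k, i ≤ k → k < j → HyLTL.Sat I α φ k
  | .rel φ ψ, i =>
      ∀ j, i ≤ j → (∀ k, i ≤ k → k < j → ¬ HyLTL.Sat I α φ k) → HyLTL.Sat I α ψ j

/-- Negation normal form: negation applied only to actions and flow constraints. -/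
inductive HyLTL.NNF {A F : Type} : HyLTL A F → Prop
  | flow (f : F) : NNF (.flow f)
  | act (a : A) : NNF (.act a)
  | nflow (f : F) : NNF (.not (.flow f))
  | nact (a : A) : NNF (.not (.act a))
  | and {φ ψ} : NNF φ → NNF ψ → NNF (.and φ ψ)
  | or {φ ψ} : NNF φ → NNF ψ → NNF (.or φ ψ)
  | next {φ} : NNF φ → NNF (.next φ)
  | untl {φ ψ} : NNF φ → NNF ψ → NNF (.untl φ ψ)
  | rel {φ ψ} : NNF φ → NNF ψ → NNF (.rel φ ψ)

/-- HyLTL⁺ formulas: flow constraints occur only positively. -/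
inductive HyLTL.Positive {A F : Type} : HyLTL A F → Prop
  | flow (f : F) : Positive (.flow f)
  | act (a : A) : Positive (.act a)
  | nact (a : A) : Positive (.not (.act a))
  | and {φ ψ} : Positive φ → Positive ψ → Positive (.and φ ψ)
  | or {φ ψ} : Positive φ → Positive ψ → Positive (.or φ ψ)
  | next {φ} : Positive φ → Positive (.next φ)
  | untl {φ ψ} : Positive φ → Positive ψ → Positive (.untl φ ψ)
  | rel {φ ψ} : Positive φ → Positive ψ → Positive (.rel φ ψ)

/-- The translation π from NNF HyLTL formulas over `A` to HyLTL⁺ formulas over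
`A ∪ {T}`, where the fresh action `T` is `none` and flow atoms are semantic flow
constraints (so that the dual constraint `f̄` is the set complement `fᶜ`). -/
def piTr {X A : Type} : HyLTL A (FlowConstraint X) → HyLTL (Option A) (FlowConstraint X)
  | .flow f =>
      .and (.flow f) (.next (.untl (.and (.act none) (.flow f)) (.not (.act none))))
  | .act a => .act (some a)
  | .not (.flow f) =>
      .or (.flow fᶜ) (.next (.untl (.act none) (.and (.act none) (.flow fᶜ))))
  | .not (.act a) => .not (.act (some a))
  | .not φ => .not (piTr φ)
  | .and φ ψ => .and (piTr φ) (piTr ψ)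
  | .or φ ψ => .or (piTr φ) (piTr ψ)
  | .next φ => .next (.untl (.act none) (.and (.not (.act none)) (piTr φ)))
  | .untl φ ψ => .untl (.or (.act none) (piTr φ)) (.and (.not (.act none)) (piTr ψ))
  | .rel φ ψ => .rel (.and (.not (.act none)) (piTr φ)) (.or (.act none) (piTr ψ))

/-! ## Discrete LTL -/

/-- LTL formulas over atomic propositions `P`. -/
inductive LTL (P : Type) : Type where
  | atom : P → LTL P
  | not : LTL P → LTL P
  | and : LTL P → LTL P → LTL P
  | or : LTL P → LTL P → LTL P
  | next : LTL P → LTL P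
  | untl : LTL P → LTL P → LTL P
  | rel : LTL P → LTL P → LTL P

/-- Satisfaction of an LTL formula by a discrete sequence (0-indexed: position `i`
here is position `i+1` of the paper). -/
def LTL.Sat {P : Type} (w : ℕ → Set P) : LTL P → ℕ → Prop
  | .atom p, i => p ∈ w i
  | .not γ, i => ¬ LTL.Sat w γ i
  | .and γ δ, i => LTL.Sat w γ i ∧ LTL.Sat w δ i
  | .or γ δ, i => LTL.Sat w γ i ∨ LTL.Sat w δ i
  | .next γ, i => LTL.Sat w γ (i + 1)
  | .untl γ δ, i =>
      ∃ j, i ≤ j ∧ LTL.Sat w δ j ∧ ∀ k, i ≤ k → k < j → LTL.Sat w γ k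
  | .rel γ δ, i =>
      ∀ j, i ≤ j → (∀ k, i ≤ k → k < j → ¬ LTL.Sat w γ k) → LTL.Sat w δ j

/-- Conjunction `γ₁ ∧ (γ₂ ∧ (⋯ ∧ γₙ))` of a nonempty list of LTL formulas. -/
def LTL.bigConj {P : Type} : (l : List (LTL P)) → l ≠ [] → LTL P
  | [], h => absurd rfl h
  | [γ], _ => γ
  | γ :: δ :: l, _ => .and γ (LTL.bigConj (δ :: l) (by simp))

/-- `γ` contains no atom from `FC` (the left summand). -/
def LTL.noFC {FC B : Type} : LTL (FC ⊕ B) → Prop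
  | .atom (Sum.inl _) => False
  | .atom (Sum.inr _) => True
  | .not γ => LTL.noFC γ
  | .and γ δ => LTL.noFC γ ∧ LTL.noFC δ
  | .or γ δ => LTL.noFC γ ∧ LTL.noFC δ
  | .next γ => LTL.noFC γ
  | .untl γ δ => LTL.noFC γ ∧ LTL.noFC δ
  | .rel γ δ => LTL.noFC γ ∧ LTL.noFC δ

/-- `γ` is FC-positive: no atom from `FC` occurs within the scope of a negation. -/
def LTL.FCpos {FC B : Type} : LTL (FC ⊕ B) → Prop
  | .atom _ => True
  | .not γ => LTL.noFC γ
  | .and γ δ => LTL.FCpos γ ∧ LTL.FCpos δ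
  | .or γ δ => LTL.FCpos γ ∧ LTL.FCpos δ
  | .next γ => LTL.FCpos γ
  | .untl γ δ => LTL.FCpos γ ∧ LTL.FCpos δ
  | .rel γ δ => LTL.FCpos γ ∧ LTL.FCpos δ

/-! ## The translation γ from HyLTL to LTL -/

/-- The formula `𝐛(a)`: the conjunction of the letters in `b a` and of the negations
of the letters not in `b a` (given that `b a` is nonempty). -/
noncomputable def bEnc {A FC B : Type} [Fintype B] [DecidableEq B]
    (b : A → Finset B) (hb : ∀ a, (b a).Nonempty) (a : A) : LTL (FC ⊕ B) :=
  LTL.bigConj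
    (((b a).toList.map fun j => LTL.atom (Sum.inr j : FC ⊕ B)) ++
      ((Finset.univ \ b a).toList.map fun j => LTL.not (LTL.atom (Sum.inr j : FC ⊕ B))))
    (by
      intro h
      rcases List.append_eq_nil_iff.mp h with ⟨h1, -⟩
      exact (hb a).ne_empty (Finset.toList_eq_nil.mp (List.map_eq_nil_iff.mp h1)))

/-- The translation γ₀ from HyLTL formulas over `A` and `FC` to LTL formulas over
`AP = FC ⊎ B`. -/
noncomputable def gamma0 {A FC B : Type} [Fintype B] [DecidableEq B]
    (b : A → Finset B) (hb : ∀ a, (b a).Nonempty) :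
    HyLTL A FC → LTL (FC ⊕ B)
  | .flow f => .atom (Sum.inl f)
  | .act a => bEnc b hb a
  | .not φ => .not (gamma0 b hb φ)
  | .and φ ψ => .and (gamma0 b hb φ) (gamma0 b hb ψ)
  | .or φ ψ => .or (gamma0 b hb φ) (gamma0 b hb ψ)
  | .next φ => .next (gamma0 b hb φ)
  | .untl φ ψ => .untl (gamma0 b hb φ) (gamma0 b hb ψ)
  | .rel φ ψ => .rel (gamma0 b hb φ) (gamma0 b hb ψ)

/-- The translation `γ(φ) = (⋀_{j ∈ B} ¬ bⱼ) ∧ γ₀(φ)`. -/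
noncomputable def gammaTr {A FC B : Type} [Fintype B] [DecidableEq B]
    (b : A → Finset B) (hb : ∀ a, (b a).Nonempty) (φ : HyLTL A FC) : LTL (FC ⊕ B) :=
  LTL.bigConj
    (((Finset.univ : Finset B).toList.map fun j =>
        LTL.not (LTL.atom (Sum.inr j : FC ⊕ B))) ++ [gamma0 b hb φ])
    (by simp)

/-- The discrete sequence `Σ(α)` associated with a hybrid trace `α` (0-indexed). -/
noncomputable def SigmaTrace {X A FC B : Type}
    (I : FC → FlowConstraint X) (b : A → Finset B) (α : HybridTrace X A) :
    ℕ → Set (FC ⊕ B)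
  | 0 => Sum.inl '' {f | (α.traj 0).sat (I f)}
  | n + 1 => Sum.inl '' {f | (α.traj (n + 1)).sat (I f)} ∪ Sum.inr '' ↑(b (α.act n))

/-! ## Büchi automata -/

/-- A Büchi automaton over the alphabet `Λ` with states `Q`. -/
structure Buchi (Q Λ : Type) where
  init : Q
  tr : Set (Q × Λ × Q)
  acc : Set Q

/-- A Büchi automaton accepts an infinite word (0-indexed) iff it has a run over
it visiting some accepting state infinitely often. -/
def Buchi.Accepts {Q Λ : Type} (𝒜 : Buchi Q Λ) (w : ℕ → Λ) : Prop :=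
  ∃ r : ℕ → Q, r 0 = 𝒜.init ∧ (∀ n, (r n, w n, r (n + 1)) ∈ 𝒜.tr) ∧
    ∃ q ∈ 𝒜.acc, ∀ N, ∃ n, N ≤ n ∧ r n = q

/-! ## Hybrid automata with Büchi condition -/

/-- A hybrid automaton with Büchi acceptance condition (BHA) over `X` and `A`. -/
structure BHA (X A : Type) where
  Loc : Type
  locFinite : Finite Loc
  Edg : Set (Loc × A × Loc)
  Dyn : Loc → FlowConstraint X
  Rst : Loc × A × Loc → Set (Valu X × Valu X)
  Init : Set Loc
  Final : Set Loc

/-- Acceptance of a hybrid trace by a BHA. -/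
def BHA.Accepts {X A : Type} (H : BHA X A) (α : HybridTrace X A) : Prop :=
  ∃ ℓ : ℕ → H.Loc,
    ℓ 0 ∈ H.Init ∧
    (∀ i, (α.traj i).sat (H.Dyn (ℓ i)) ∧
      (ℓ i, α.act i, ℓ (i + 1)) ∈ H.Edg ∧
      ((α.traj i).lastState, (α.traj (i + 1)).firstState) ∈
        H.Rst (ℓ i, α.act i, ℓ (i + 1))) ∧
    ∃ l ∈ H.Final, ∀ N, ∃ n, N ≤ n ∧ ℓ n = l

/-- The BHA `ℋ_φ` constructed (as in Algorithm 1, without reachability pruning) from a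
Büchi automaton over the alphabet of subsets of `AP = FC ⊎ B`. -/
def HofBuchi {X A FC B Q : Type} [Finite Q] [Finite FC]
    (I : FC → FlowConstraint X) (b : A → Finset B)
    (𝒜 : Buchi Q (Set (FC ⊕ B))) : BHA X A where
  Loc := Q × Set FC
  locFinite := inferInstance
  Edg := {e | ∃ σ : Set (FC ⊕ B),
    (e.1.1, σ, e.2.2.1) ∈ 𝒜.tr ∧
    {f | Sum.inl f ∈ σ} = e.2.2.2 ∧
    {j | Sum.inr j ∈ σ} = ↑(b e.2.1)}
  Dyn := fun l => {p | ∀ f ∈ l.2, p ∈ I f}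
  Rst := fun _ => Set.univ
  Init := {l | ∃ σ : Set (FC ⊕ B),
    (𝒜.init, σ, l.1) ∈ 𝒜.tr ∧
    {f | Sum.inl f ∈ σ} = l.2 ∧
    {j : B | Sum.inr j ∈ σ} = ∅}
  Final := {l | l.1 ∈ 𝒜.acc}

theorem bigConj_sat {P : Type} (w : ℕ → Set P) (i : ℕ) :
    ∀ (l : List (LTL P)) (h : l ≠ []),
      LTL.Sat w (LTL.bigConj l h) i ↔ ∀ γ ∈ l, LTL.Sat w γ i := by
  intro l
  induction l with
  | nil => intro h; exact absurd rfl h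
  | cons γ l ih =>
    intro _
    cases l with
    | nil => simp [LTL.bigConj, LTL.Sat]
    | cons δ l =>
      simp only [LTL.bigConj, LTL.Sat, ih (by simp), List.mem_cons, forall_eq_or_imp]

theorem inl_mem_Sigma {X A FC B : Type} (I : FC → FlowConstraint X) (b : A → Finset B)
    (α : HybridTrace X A) (f : FC) (i : ℕ) :
    (Sum.inl f : FC ⊕ B) ∈ SigmaTrace I b α i ↔ (α.traj i).sat (I f) := by
  cases i <;> simp [SigmaTrace]

theorem inr_mem_Sigma_zero {X A FC B : Type} (I : FC → FlowConstraint X) (b : A → Finset B)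
    (α : HybridTrace X A) (j : B) :
    (Sum.inr j : FC ⊕ B) ∈ SigmaTrace I b α 0 ↔ False := by
  simp [SigmaTrace]

theorem inr_mem_Sigma_succ {X A FC B : Type} (I : FC → FlowConstraint X) (b : A → Finset B)
    (α : HybridTrace X A) (j : B) (i : ℕ) :
    (Sum.inr j : FC ⊕ B) ∈ SigmaTrace I b α (i + 1) ↔ j ∈ b (α.act i) := by
  simp [SigmaTrace]

theorem bEnc_sat {X A FC B : Type} [Fintype B] [DecidableEq B]
    (I : FC → FlowConstraint X) (b : A → Finset B) (hb : ∀ a, (b a).Nonempty)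
    (hinj : Function.Injective b) (α : HybridTrace X A) (a : A) (i : ℕ) :
    LTL.Sat (SigmaTrace I b α) (bEnc b hb a) i ↔ 0 < i ∧ α.act (i - 1) = a := by
  rw [bEnc, bigConj_sat]
  simp only [List.mem_append, List.mem_map, Finset.mem_toList, Finset.mem_sdiff,
    Finset.mem_univ, true_and]
  constructor
  · rintro h
    cases i with
    | zero =>
      obtain ⟨j, hj⟩ := hb a
      have := h (LTL.atom (Sum.inr j)) (Or.inl ⟨j, hj, rfl⟩)
      simp only [LTL.Sat] at this
      exact absurd this (by simp [SigmaTrace])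
    | succ i =>
      refine ⟨Nat.succ_pos _, hinj ?_⟩
      ext j
      constructor
      · intro hj
        by_contra hj'
        have := h (LTL.not (LTL.atom (Sum.inr j))) (Or.inr ⟨j, hj', rfl⟩)
        simp only [LTL.Sat] at this
        exact this ((inr_mem_Sigma_succ I b α j i).mpr hj)
      · intro hj
        have := h (LTL.atom (Sum.inr j)) (Or.inl ⟨j, hj, rfl⟩)
        simp only [LTL.Sat] at this
        exact (inr_mem_Sigma_succ I b α j i).mp this
  · rintro ⟨hi, ha⟩ γ hγ
    cases i with
    | zero => exact absurd hi (lt_irrefl 0)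
    | succ i =>
      simp only [Nat.add_sub_cancel] at ha
      rcases hγ with ⟨j, hj, rfl⟩ | ⟨j, hj, rfl⟩
      · simp only [LTL.Sat]
        exact (inr_mem_Sigma_succ I b α j i).mpr (ha ▸ hj)
      · simp only [LTL.Sat]
        intro hmem
        exact hj (ha ▸ (inr_mem_Sigma_succ I b α j i).mp hmem)

theorem gamma0_sat {X A FC B : Type} [Fintype B] [DecidableEq B]
    (I : FC → FlowConstraint X) (b : A → Finset B) (hb : ∀ a, (b a).Nonempty)
    (hinj : Function.Injective b) (α : HybridTrace X A) :
    ∀ (φ : HyLTL A FC) (i : ℕ),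
      HyLTL.Sat I α φ i ↔ LTL.Sat (SigmaTrace I b α) (gamma0 b hb φ) i := by
  intro φ
  induction φ with
  | flow f => intro i; simp [HyLTL.Sat, gamma0, LTL.Sat, inl_mem_Sigma]
  | act a => intro i; rw [gamma0]; exact (bEnc_sat I b hb hinj α a i).symm
  | not φ ih => intro i; simp [HyLTL.Sat, gamma0, LTL.Sat, ih]
  | and φ ψ ihφ ihψ => intro i; simp [HyLTL.Sat, gamma0, LTL.Sat, ihφ, ihψ]
  | or φ ψ ihφ ihψ => intro i; simp [HyLTL.Sat, gamma0, LTL.Sat, ihφ, ihψ]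
  | next φ ih => intro i; simp [HyLTL.Sat, gamma0, LTL.Sat, ih]
  | untl φ ψ ihφ ihψ => intro i; simp [HyLTL.Sat, gamma0, LTL.Sat, ihφ, ihψ]
  | rel φ ψ ihφ ihψ => intro i; simp [HyLTL.Sat, gamma0, LTL.Sat, ihφ, ihψ]

theorem stmt2 {X A FC B : Type} [Fintype X] [Fintype A] [Fintype FC]
    [Fintype B] [DecidableEq B]
    (I : FC → FlowConstraint X) (b : A → Finset B)
    (hb : ∀ a, (b a).Nonempty) (hinj : Function.Injective b)
    (φ : HyLTL A FC) (α : HybridTrace X A) :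
    HyLTL.Sat I α φ 0 ↔ LTL.Sat (SigmaTrace I b α) (gammaTr b hb φ) 0 := by
  rw [gammaTr, bigConj_sat]
  constructor
  · intro h γ hγ
    simp only [List.mem_append, List.mem_map, Finset.mem_toList, List.mem_singleton] at hγ
    rcases hγ with ⟨j, -, rfl⟩ | rfl
    · simp only [LTL.Sat]
      exact fun hmem => (inr_mem_Sigma_zero I b α j).mp hmem
    · exact (gamma0_sat I b hb hinj α φ 0).mp h
  · intro h
    exact (gamma0_sat I b hb hinj α φ 0).mpr
      (h (gamma0 b hb φ) (by simp))
end

section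
/- For every HyLTL formula φ over A and FC, every hybrid trace α over A and X, and every i ≥ 1: α,i ⊨ φ if and only if Σ(α),i ⊨ γ₀(φ). -/
theorem bEnc_sat_s3 {A FC B : Type} [Fintype B] [DecidableEq B]
    (b : A → Finset B) (hb : ∀ a, (b a).Nonempty) (a : A)
    (w : ℕ → Set (FC ⊕ B)) (i : ℕ) :
    LTL.Sat w (bEnc b hb a) i ↔ ∀ j : B, (Sum.inr j ∈ w i ↔ j ∈ b a) := by
  rw [bEnc, bigConj_sat]
  constructor
  · intro h j
    constructor
    · intro hj
      by_contra hjb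
      have := h (LTL.not (LTL.atom (Sum.inr j))) (by
        apply List.mem_append_right
        simp [Finset.mem_toList, hjb])
      exact this hj
    · intro hj
      exact h (LTL.atom (Sum.inr j)) (by
        apply List.mem_append_left; simp [Finset.mem_toList, hj])
  · intro h γ hγ
    rcases List.mem_append.mp hγ with hγ | hγ
    · rcases List.mem_map.mp hγ with ⟨j, hj, rfl⟩
      exact (h j).mpr (Finset.mem_toList.mp hj)
    · rcases List.mem_map.mp hγ with ⟨j, hj, rfl⟩
      intro hc
      have := (h j).mp hc
      simp only [Finset.mem_toList, Finset.mem_sdiff] at hj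
      exact hj.2 this

theorem inl_mem_SigmaTrace {X A FC B : Type}
    (I : FC → FlowConstraint X) (b : A → Finset B) (α : HybridTrace X A)
    (f : FC) (i : ℕ) :
    Sum.inl f ∈ SigmaTrace I b α i ↔ (α.traj i).sat (I f) := by
  cases i with
  | zero => simp [SigmaTrace]
  | succ n => simp [SigmaTrace]

theorem inr_mem_SigmaTrace {X A FC B : Type}
    (I : FC → FlowConstraint X) (b : A → Finset B) (α : HybridTrace X A)
    (j : B) (i : ℕ) :
    Sum.inr j ∈ SigmaTrace I b α i ↔ ∃ n, i = n + 1 ∧ j ∈ b (α.act n) := by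
  cases i with
  | zero => simp [SigmaTrace]
  | succ n => simp [SigmaTrace]

theorem stmt3 {X A FC B : Type} [Fintype X] [Fintype A] [Fintype FC]
    [Fintype B] [DecidableEq B]
    (I : FC → FlowConstraint X) (b : A → Finset B)
    (hb : ∀ a, (b a).Nonempty) (hinj : Function.Injective b)
    (φ : HyLTL A FC) (α : HybridTrace X A) (i : ℕ) :
    HyLTL.Sat I α φ i ↔ LTL.Sat (SigmaTrace I b α) (gamma0 b hb φ) i := by
  induction φ generalizing i with
  | flow f => simp [HyLTL.Sat, gamma0, LTL.Sat, inl_mem_SigmaTrace]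
  | act a =>
    rw [gamma0, bEnc_sat_s3]
    constructor
    · rintro ⟨hi, ha⟩ j
      obtain ⟨n, rfl⟩ := Nat.exists_eq_succ_of_ne_zero (Nat.pos_iff_ne_zero.mp hi)
      rw [inr_mem_SigmaTrace]
      simp only [Nat.succ_sub_one] at ha
      constructor
      · rintro ⟨m, hm, hj⟩
        obtain rfl : m = n := by omega
        rw [ha] at hj; exact hj
      · intro hj; exact ⟨n, rfl, by rw [ha]; exact hj⟩
    · intro h
      obtain ⟨j, hj⟩ := hb a
      obtain ⟨n, rfl, hjn⟩ := (inr_mem_SigmaTrace I b α j i).mp ((h j).mpr hj)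
      refine ⟨Nat.succ_pos n, ?_⟩
      simp only [Nat.succ_sub_one]
      apply hinj
      ext x
      constructor
      · intro hx
        have := (h x).mp ((inr_mem_SigmaTrace I b α x (n+1)).mpr ⟨n, rfl, hx⟩)
        exact this
      · intro hx
        obtain ⟨m, hm, hxm⟩ := (inr_mem_SigmaTrace I b α x (n+1)).mp ((h x).mpr hx)
        obtain rfl : m = n := by omega
        exact hxm
  | not φ ih => simp [HyLTL.Sat, gamma0, LTL.Sat, ih]
  | and φ ψ ih1 ih2 => simp [HyLTL.Sat, gamma0, LTL.Sat, ih1, ih2]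
  | or φ ψ ih1 ih2 => simp [HyLTL.Sat, gamma0, LTL.Sat, ih1, ih2]
  | next φ ih => simp [HyLTL.Sat, gamma0, LTL.Sat, ih]
  | untl φ ψ ih1 ih2 => simp [HyLTL.Sat, gamma0, LTL.Sat, ih1, ih2]
  | rel φ ψ ih1 ih2 => simp [HyLTL.Sat, gamma0, LTL.Sat, ih1, ih2]
end

section
/- Let A be a finite set of actions and FC a finite set of flow constraints over X. For every HyLTL⁺ formula φ over A and FC there exists a hybrid automaton with Büchi condition ℋ_φ over X and A that accepts exactly those hybrid traces α over A and X with α,1 ⊨ φ. -/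
/-! ## Auxiliary development for stmt7 -/

namespace Stmt7

open HyLTL

/-- Subformulas. -/
def subf {A FC : Type} : HyLTL A FC → List (HyLTL A FC)
  | .flow f => [.flow f]
  | .act a => [.act a]
  | .not φ => .not φ :: subf φ
  | .and φ ψ => .and φ ψ :: (subf φ ++ subf ψ)
  | .or φ ψ => .or φ ψ :: (subf φ ++ subf ψ)
  | .next φ => .next φ :: subf φ
  | .untl φ ψ => .untl φ ψ :: (subf φ ++ subf ψ)
  | .rel φ ψ => .rel φ ψ :: (subf φ ++ subf ψ)

lemma self_mem_subf {A FC : Type} (φ : HyLTL A FC) : φ ∈ subf φ := by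
  cases φ <;> simp [subf]

lemma subf_trans {A FC : Type} :
    ∀ (Φ χ : HyLTL A FC), χ ∈ subf Φ → ∀ ξ ∈ subf χ, ξ ∈ subf Φ := by
  intro Φ
  induction Φ with
  | flow f => intro χ h ξ hξ; simp [subf] at h; subst h; exact hξ
  | act a => intro χ h ξ hξ; simp [subf] at h; subst h; exact hξ
  | not φ ih =>
    intro χ h ξ hξ
    rcases List.mem_cons.mp h with h | h
    · subst h; exact hξ
    · exact List.mem_cons_of_mem _ (ih χ h ξ hξ)
  | next φ ih =>
    intro χ h ξ hξ
    rcases List.mem_cons.mp h with h | h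
    · subst h; exact hξ
    · exact List.mem_cons_of_mem _ (ih χ h ξ hξ)
  | and φ ψ ihφ ihψ =>
    intro χ h ξ hξ
    rcases List.mem_cons.mp h with h | h
    · subst h; exact hξ
    · rcases List.mem_append.mp h with h | h
      · exact List.mem_cons_of_mem _ (List.mem_append.mpr (Or.inl (ihφ χ h ξ hξ)))
      · exact List.mem_cons_of_mem _ (List.mem_append.mpr (Or.inr (ihψ χ h ξ hξ)))
  | or φ ψ ihφ ihψ =>
    intro χ h ξ hξ
    rcases List.mem_cons.mp h with h | h
    · subst h; exact hξ
    · rcases List.mem_append.mp h with h | h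
      · exact List.mem_cons_of_mem _ (List.mem_append.mpr (Or.inl (ihφ χ h ξ hξ)))
      · exact List.mem_cons_of_mem _ (List.mem_append.mpr (Or.inr (ihψ χ h ξ hξ)))
  | untl φ ψ ihφ ihψ =>
    intro χ h ξ hξ
    rcases List.mem_cons.mp h with h | h
    · subst h; exact hξ
    · rcases List.mem_append.mp h with h | h
      · exact List.mem_cons_of_mem _ (List.mem_append.mpr (Or.inl (ihφ χ h ξ hξ)))
      · exact List.mem_cons_of_mem _ (List.mem_append.mpr (Or.inr (ihψ χ h ξ hξ)))
  | rel φ ψ ihφ ihψ =>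
    intro χ h ξ hξ
    rcases List.mem_cons.mp h with h | h
    · subst h; exact hξ
    · rcases List.mem_append.mp h with h | h
      · exact List.mem_cons_of_mem _ (List.mem_append.mpr (Or.inl (ihφ χ h ξ hξ)))
      · exact List.mem_cons_of_mem _ (List.mem_append.mpr (Or.inr (ihψ χ h ξ hξ)))

lemma mem_subf_of_child {A FC : Type} {Φ χ ξ : HyLTL A FC}
    (h : χ ∈ subf Φ) (h2 : ξ ∈ subf χ) : ξ ∈ subf Φ := subf_trans Φ χ h ξ h2

lemma subf_positive {A FC : Type} {Φ : HyLTL A FC} (h : Φ.Positive) :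
    ∀ χ ∈ subf Φ, χ.Positive := by
  induction h with
  | flow f => intro χ hχ; simp [subf] at hχ; subst hχ; exact .flow f
  | act a => intro χ hχ; simp [subf] at hχ; subst hχ; exact .act a
  | nact a =>
    intro χ hχ
    simp [subf] at hχ
    rcases hχ with h | h <;> subst h
    · exact .nact a
    · exact .act a
  | and h1 h2 ih1 ih2 =>
    intro χ hχ
    rcases List.mem_cons.mp hχ with h | h
    · subst h; exact .and h1 h2
    · rcases List.mem_append.mp h with h | h
      · exact ih1 χ h
      · exact ih2 χ h
  | or h1 h2 ih1 ih2 =>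
    intro χ hχ
    rcases List.mem_cons.mp hχ with h | h
    · subst h; exact .or h1 h2
    · rcases List.mem_append.mp h with h | h
      · exact ih1 χ h
      · exact ih2 χ h
  | next h1 ih1 =>
    intro χ hχ
    rcases List.mem_cons.mp hχ with h | h
    · subst h; exact .next h1
    · exact ih1 χ h
  | untl h1 h2 ih1 ih2 =>
    intro χ hχ
    rcases List.mem_cons.mp hχ with h | h
    · subst h; exact .untl h1 h2
    · rcases List.mem_append.mp h with h | h
      · exact ih1 χ h
      · exact ih2 χ h
  | rel h1 h2 ih1 ih2 =>
    intro χ hχ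
    rcases List.mem_cons.mp hχ with h | h
    · subst h; exact .rel h1 h2
    · rcases List.mem_append.mp h with h | h
      · exact ih1 χ h
      · exact ih2 χ h

lemma positive_not {A FC : Type} {ξ : HyLTL A FC}
    (h : (HyLTL.not ξ).Positive) : ∃ a, ξ = HyLTL.act a := by
  cases h with
  | nact a => exact ⟨a, rfl⟩

/-! ### Expansion laws -/

lemma untl_expand {X A FC : Type} (I : FC → FlowConstraint X) (α : HybridTrace X A)
    {φ ψ : HyLTL A FC} {i : ℕ} (h : HyLTL.Sat I α (.untl φ ψ) i) :
    HyLTL.Sat I α ψ i ∨ (HyLTL.Sat I α φ i ∧ HyLTL.Sat I α (.untl φ ψ) (i + 1)) := by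
  obtain ⟨j, hij, hψ, hpre⟩ := h
  rcases eq_or_lt_of_le hij with h | h
  · exact Or.inl (h ▸ hψ)
  · exact Or.inr ⟨hpre i le_rfl h,
      ⟨j, h, hψ, fun k hk1 hk2 => hpre k (le_of_lt (Nat.lt_of_succ_le hk1)) hk2⟩⟩

lemma rel_expand {X A FC : Type} (I : FC → FlowConstraint X) (α : HybridTrace X A)
    {φ ψ : HyLTL A FC} {i : ℕ} (h : HyLTL.Sat I α (.rel φ ψ) i) :
    HyLTL.Sat I α ψ i ∧ (HyLTL.Sat I α φ i ∨ HyLTL.Sat I α (.rel φ ψ) (i + 1)) := by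
  constructor
  · exact h i le_rfl (fun k hk1 hk2 => absurd hk1 (by omega))
  · by_cases hφ : HyLTL.Sat I α φ i
    · exact Or.inl hφ
    · refine Or.inr ?_
      intro j hj hpre
      refine h j (by omega) ?_
      intro k hk1 hk2
      rcases eq_or_lt_of_le hk1 with h' | h'
      · exact h' ▸ hφ
      · exact hpre k h' hk2

end Stmt7


namespace Stmt7

/-! ### The construction -/

def isUntil {A FC : Type} : HyLTL A FC → Bool
  | .untl _ _ => true
  | _ => false

/-- The list of until subformulas. -/
def usList {A FC : Type} (Φ : HyLTL A FC) : List (HyLTL A FC) :=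
  (subf Φ).filter isUntil

/-- The fairness condition for an until formula. -/
def cond {A FC : Type} (u : HyLTL A FC) (q : Set (HyLTL A FC)) : Prop :=
  match u with
  | .untl _ ψ => u ∉ q ∨ ψ ∈ q
  | _ => True

open Classical in
/-- The counter update. -/
noncomputable def updC {A FC : Type} (Φ : HyLTL A FC) (q : Set (HyLTL A FC))
    (j : Fin ((usList Φ).length + 1)) : Fin ((usList Φ).length + 1) :=
  if h : j.val < (usList Φ).length then
    if cond ((usList Φ).get ⟨j.val, h⟩) q then ⟨j.val + 1, by omega⟩ else j
  else ⟨0, by omega⟩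

lemma updC_spec {A FC : Type} (Φ : HyLTL A FC) (q : Set (HyLTL A FC))
    (j : Fin ((usList Φ).length + 1)) :
    (j.val = (usList Φ).length ∧ (updC Φ q j).val = 0) ∨
    (∃ h : j.val < (usList Φ).length,
      (updC Φ q j = j ∧ ¬ cond ((usList Φ).get ⟨j.val, h⟩) q) ∨
      ((updC Φ q j).val = j.val + 1 ∧ cond ((usList Φ).get ⟨j.val, h⟩) q)) := by
  unfold updC
  split_ifs with h1 h2
  · exact Or.inr ⟨h1, Or.inr ⟨rfl, h2⟩⟩
  · exact Or.inr ⟨h1, Or.inl ⟨rfl, h2⟩⟩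
  · exact Or.inl ⟨by omega, rfl⟩

/-- The local consistency condition. -/
def locok {A FC : Type} (q q' : Set (HyLTL A FC)) (o : Option A) : Prop :=
  ∀ χ ∈ q, match χ with
  | HyLTL.flow _ => True
  | HyLTL.act a => o = some a
  | HyLTL.not ξ => ∃ a, ξ = HyLTL.act a ∧ o ≠ some a
  | HyLTL.and φ₁ ψ₁ => φ₁ ∈ q ∧ ψ₁ ∈ q
  | HyLTL.or φ₁ ψ₁ => φ₁ ∈ q ∨ ψ₁ ∈ q
  | HyLTL.next φ₁ => φ₁ ∈ q'
  | HyLTL.untl φ₁ ψ₁ => ψ₁ ∈ q ∨ (φ₁ ∈ q ∧ HyLTL.untl φ₁ ψ₁ ∈ q')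
  | HyLTL.rel φ₁ ψ₁ => ψ₁ ∈ q ∧ (φ₁ ∈ q ∨ HyLTL.rel φ₁ ψ₁ ∈ q')

/-- The BHA built from a positive formula. -/
noncomputable def theBHA {X A FC : Type} [Fintype A]
    (I : FC → FlowConstraint X) (Φ : HyLTL A FC) : BHA X A where
  Loc := {s : Set (HyLTL A FC) // ∀ x ∈ s, x ∈ subf Φ} ×
    Fin ((usList Φ).length + 1) × Option A
  locFinite := by
    have h : {t : Set (HyLTL A FC) | t ⊆ {x | x ∈ subf Φ}}.Finite :=
      Set.Finite.finite_subsets (List.finite_toSet _)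
    have : Finite {s : Set (HyLTL A FC) // ∀ x ∈ s, x ∈ subf Φ} := h.to_subtype
    infer_instance
  Edg := {e | locok e.1.1.1 e.2.2.1.1 e.1.2.2
      ∧ e.2.2.2.2 = some e.2.1
      ∧ e.2.2.2.1 = updC Φ e.1.1.1 e.1.2.1}
  Dyn := fun l => {p | ∀ f, HyLTL.flow f ∈ l.1.1 → p ∈ I f}
  Rst := fun _ => Set.univ
  Init := {l | Φ ∈ l.1.1 ∧ l.2.1 = ⟨0, by omega⟩ ∧ l.2.2 = none}
  Final := {l | l.2.1.val = (usList Φ).length}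

lemma dyn_iff {X A FC : Type} (I : FC → FlowConstraint X) (τ : Traj X)
    (q : Set (HyLTL A FC)) :
    τ.sat {p | ∀ f, HyLTL.flow f ∈ q → p ∈ I f} ↔
      ∀ f, HyLTL.flow f ∈ q → τ.sat (I f) := by
  constructor
  · intro h f hf t ht
    exact h t ht f hf
  · intro h t ht f hf
    exact h f hf t ht

/-! ### Counter lemmas -/

section Counter

variable {A FC : Type} (Φ : HyLTL A FC)
  (q : ℕ → Set (HyLTL A FC)) (j : ℕ → Fin ((usList Φ).length + 1))

lemma climb (hrec : ∀ n, j (n + 1) = updC Φ (q n) (j n))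
    (v : ℕ) (hv : v < (usList Φ).length) :
    ∀ b a, a ≤ b → (j a).val ≤ v → v < (j b).val →
      ∃ t, a ≤ t ∧ t < b ∧ cond ((usList Φ).get ⟨v, hv⟩) (q t) := by
  intro b
  induction b with
  | zero =>
    intro a ha h1 h2
    have : a = 0 := by omega
    subst this
    omega
  | succ c ih =>
    intro a ha h1 h2
    have hac : a ≤ c := by
      rcases Nat.eq_or_lt_of_le ha with h | h
      · exfalso; subst h; omega
      · omega
    rcases Nat.lt_or_ge v (j c).val with hc | hc
    · obtain ⟨t, ht1, ht2, ht3⟩ := ih a hac h1 hc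
      exact ⟨t, ht1, by omega, ht3⟩
    · rw [hrec c] at h2
      rcases updC_spec Φ (q c) (j c) with ⟨hm, h0⟩ | ⟨hlt, hcase⟩
      · omega
      · rcases hcase with ⟨heq, -⟩ | ⟨hsucc, hcond⟩
        · rw [heq] at h2; omega
        · have hveq : (j c).val = v := by omega
          refine ⟨c, hac, by omega, ?_⟩
          have : ((usList Φ).get ⟨v, hv⟩ : HyLTL A FC) =
              (usList Φ).get ⟨(j c).val, hlt⟩ := by
            congr 1
            exact Fin.ext hveq.symm
          rw [this]
          exact hcond

lemma reach (hrec : ∀ n, j (n + 1) = updC Φ (q n) (j n))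
    (hconds : ∀ v (hv : v < (usList Φ).length), ∀ N, ∃ n, N ≤ n ∧
      cond ((usList Φ).get ⟨v, hv⟩) (q n)) :
    ∀ N, ∃ n, N ≤ n ∧ (j n).val = (usList Φ).length := by
  have key : ∀ d N, (usList Φ).length - (j N).val ≤ d →
      ∃ n, N ≤ n ∧ (j n).val = (usList Φ).length := by
    intro d
    induction d with
    | zero =>
      intro N h
      have : (j N).val = (usList Φ).length := by have := (j N).isLt; omega
      exact ⟨N, le_rfl, this⟩
    | succ d ih =>
      intro N h
      by_cases hNm : (j N).val = (usList Φ).length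
      · exact ⟨N, le_rfl, hNm⟩
      · have hv : (j N).val < (usList Φ).length := by have := (j N).isLt; omega
        obtain ⟨n, hNn, hcond⟩ := hconds (j N).val hv N
        have stay : ∀ t, N ≤ t →
            (∀ s, N ≤ s → s ≤ t → (j s).val = (j N).val) ∨
            (∃ s, N ≤ s ∧ (j N).val < (j s).val) := by
          intro t ht
          induction t, ht using Nat.le_induction with
          | base =>
            left
            intro s hs1 hs2
            have : s = N := by omega
            rw [this]
          | succ t ht iht =>
            rcases iht with hall | hex
            · have hjt : (j t).val = (j N).val := hall t ht le_rfl
              rcases updC_spec Φ (q t) (j t) with ⟨hmm, -⟩ | ⟨hlt, hcase⟩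
              · omega
              · rcases hcase with ⟨heq, -⟩ | ⟨hsucc, -⟩
                · left
                  intro s hs1 hs2
                  rcases Nat.eq_or_lt_of_le hs2 with h' | h'
                  · rw [h', hrec t, heq, hjt]
                  · exact hall s hs1 (by omega)
                · right
                  refine ⟨t + 1, by omega, ?_⟩
                  rw [hrec t]
                  omega
            · exact Or.inr hex
        rcases stay (n + 1) (by omega) with hall | ⟨s, hs1, hs2⟩
        · have hjn : (j n).val = (j N).val := hall n hNn (by omega)
          have hjn1 : (j (n + 1)).val = (j N).val := hall (n + 1) (by omega) le_rfl
          rcases updC_spec Φ (q n) (j n) with ⟨hmm, -⟩ | ⟨hlt, hcase⟩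
          · omega
          · rcases hcase with ⟨-, hnc⟩ | ⟨hsucc, -⟩
            · exfalso
              apply hnc
              have : ((usList Φ).get ⟨(j n).val, hlt⟩ : HyLTL A FC) =
                  (usList Φ).get ⟨(j N).val, hv⟩ := by
                congr 1
                exact Fin.ext hjn
              rw [this]
              exact hcond
            · rw [hrec n] at hjn1; omega
        · obtain ⟨n', hn'1, hn'2⟩ := ih s (by omega)
          exact ⟨n', by omega, hn'2⟩
  intro N
  exact key (usList Φ).length N (by omega)

lemma conds_io (hrec : ∀ n, j (n + 1) = updC Φ (q n) (j n))
    (hio : ∀ N, ∃ n, N ≤ n ∧ (j n).val = (usList Φ).length) :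
    ∀ v (hv : v < (usList Φ).length), ∀ N, ∃ n, N ≤ n ∧
      cond ((usList Φ).get ⟨v, hv⟩) (q n) := by
  intro v hv N
  obtain ⟨n₁, hn₁, hj₁⟩ := hio N
  have h0 : (j (n₁ + 1)).val = 0 := by
    rcases updC_spec Φ (q n₁) (j n₁) with ⟨-, h⟩ | ⟨hlt, -⟩
    · rw [hrec n₁]; exact h
    · omega
  obtain ⟨n₂, hn₂, hj₂⟩ := hio (n₁ + 2)
  obtain ⟨t, ht1, ht2, ht3⟩ := climb Φ q j hrec v hv n₂ (n₁ + 1)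
    (by omega) (by omega) (by omega)
  exact ⟨t, by omega, ht3⟩

end Counter

end Stmt7


namespace Stmt7

/-! ### Soundness -/

lemma sound {X A FC : Type} [Fintype A] (I : FC → FlowConstraint X) (Φ : HyLTL A FC)
    (α : HybridTrace X A) (h : (theBHA I Φ).Accepts α) : HyLTL.Sat I α Φ 0 := by
  obtain ⟨ℓ, hinit, hstep, l, hlF, hlio⟩ := h
  set q : ℕ → Set (HyLTL A FC) := fun n => (ℓ n).1.1 with hq
  set j : ℕ → Fin ((usList Φ).length + 1) := fun n => (ℓ n).2.1 with hjdef
  set o : ℕ → Option A := fun n => (ℓ n).2.2 with hodef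
  have hloc : ∀ i, locok (q i) (q (i + 1)) (o i) := fun i => ((hstep i).2.1).1
  have ho : ∀ i, o (i + 1) = some (α.act i) := fun i => ((hstep i).2.1).2.1
  have hj : ∀ i, j (i + 1) = updC Φ (q i) (j i) := fun i => ((hstep i).2.1).2.2
  have ho0 : o 0 = none := hinit.2.2
  have hdyn : ∀ i f, HyLTL.flow f ∈ q i → (α.traj i).sat (I f) :=
    fun i => (dyn_iff I (α.traj i) (q i)).mp (hstep i).1
  have hio : ∀ N, ∃ n, N ≤ n ∧ (j n).val = (usList Φ).length := by
    intro N
    obtain ⟨n, h1, h2⟩ := hlio N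
    refine ⟨n, h1, ?_⟩
    have hF : l.2.1.val = (usList Φ).length := hlF
    rw [hjdef]
    simp only
    rw [h2]
    exact hF
  have hconds := conds_io Φ q j hj hio
  have main : ∀ χ : HyLTL A FC, ∀ i, χ ∈ q i → HyLTL.Sat I α χ i := by
    intro χ
    induction χ with
    | flow f =>
      intro i hmem
      exact hdyn i f hmem
    | act a =>
      intro i hmem
      have h2 : o i = some a := hloc i _ hmem
      cases i with
      | zero => rw [ho0] at h2; cases h2
      | succ k =>
        rw [ho k] at h2
        refine ⟨Nat.succ_pos k, ?_⟩
        simpa using (Option.some_injective _ h2)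
    | not ξ ih =>
      intro i hmem
      have h2 : ∃ a, ξ = HyLTL.act a ∧ o i ≠ some a := hloc i _ hmem
      obtain ⟨a, rfl, hne⟩ := h2
      intro hsat
      obtain ⟨hpos, heq⟩ := hsat
      cases i with
      | zero => omega
      | succ k =>
        apply hne
        rw [ho k]
        simp only [Nat.add_sub_cancel] at heq
        rw [heq]
    | and φ₁ ψ₁ ih1 ih2 =>
      intro i hmem
      have h2 : φ₁ ∈ q i ∧ ψ₁ ∈ q i := hloc i _ hmem
      exact ⟨ih1 i h2.1, ih2 i h2.2⟩
    | or φ₁ ψ₁ ih1 ih2 =>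
      intro i hmem
      have h2 : φ₁ ∈ q i ∨ ψ₁ ∈ q i := hloc i _ hmem
      rcases h2 with h2 | h2
      · exact Or.inl (ih1 i h2)
      · exact Or.inr (ih2 i h2)
    | next φ₁ ih =>
      intro i hmem
      have h2 : φ₁ ∈ q (i + 1) := hloc i _ hmem
      exact ih (i + 1) h2
    | untl φ₁ ψ₁ ih1 ih2 =>
      intro i hmem
      have hsubf : HyLTL.untl φ₁ ψ₁ ∈ subf Φ := (ℓ i).1.2 _ hmem
      have hus : HyLTL.untl φ₁ ψ₁ ∈ usList Φ := List.mem_filter.mpr ⟨hsubf, rfl⟩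
      obtain ⟨⟨v, hv⟩, hget⟩ := List.mem_iff_get.mp hus
      by_contra hno
      have hchain : ∀ d, HyLTL.untl φ₁ ψ₁ ∈ q (i + d) ∧ ∀ k, k < d → φ₁ ∈ q (i + k) := by
        intro d
        induction d with
        | zero => exact ⟨hmem, fun k hk => absurd hk (by omega)⟩
        | succ d ihd =>
          obtain ⟨hu, hpre⟩ := ihd
          have h2 : ψ₁ ∈ q (i + d) ∨
              (φ₁ ∈ q (i + d) ∧ HyLTL.untl φ₁ ψ₁ ∈ q (i + d + 1)) := hloc (i + d) _ hu
          rcases h2 with h2 | ⟨h2a, h2b⟩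
          · exfalso
            apply hno
            refine ⟨i + d, by omega, ih2 _ h2, ?_⟩
            intro k hk1 hk2
            have hk3 : φ₁ ∈ q k := by
              have := hpre (k - i) (by omega)
              have hki : i + (k - i) = k := by omega
              rwa [hki] at this
            exact ih1 _ hk3
          · refine ⟨h2b, ?_⟩
            intro k hk
            rcases Nat.lt_succ_iff_lt_or_eq.mp hk with h' | h'
            · exact hpre k h'
            · subst h'; exact h2a
      have hpsi : ∀ d, ψ₁ ∉ q (i + d) := by
        intro d hψ
        apply hno
        refine ⟨i + d, by omega, ih2 _ hψ, ?_⟩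
        intro k hk1 hk2
        have hk3 : φ₁ ∈ q k := by
          have := (hchain d).2 (k - i) (by omega)
          have hki : i + (k - i) = k := by omega
          rwa [hki] at this
        exact ih1 _ hk3
      obtain ⟨n, hn, hcond⟩ := hconds v hv i
      rw [hget] at hcond
      have hc : HyLTL.untl φ₁ ψ₁ ∉ q n ∨ ψ₁ ∈ q n := hcond
      have hin : i + (n - i) = n := by omega
      rcases hc with hc | hc
      · exact hc (hin ▸ (hchain (n - i)).1)
      · exact hpsi (n - i) (by rwa [hin])
    | rel φ₁ ψ₁ ih1 ih2 =>
      intro i hmem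
      intro jj hij hpre
      have hchain : ∀ d, i + d ≤ jj → HyLTL.rel φ₁ ψ₁ ∈ q (i + d) := by
        intro d
        induction d with
        | zero => intro _; exact hmem
        | succ d ihd =>
          intro hle
          have hd := ihd (by omega)
          have h2 : ψ₁ ∈ q (i + d) ∧
              (φ₁ ∈ q (i + d) ∨ HyLTL.rel φ₁ ψ₁ ∈ q (i + d + 1)) := hloc (i + d) _ hd
          rcases h2.2 with h2a | h2a
          · exact absurd (ih1 _ h2a) (hpre (i + d) (by omega) (by omega))
          · exact h2a
      have hj' : HyLTL.rel φ₁ ψ₁ ∈ q jj := by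
        have := hchain (jj - i) (by omega)
        have hki : i + (jj - i) = jj := by omega
        rwa [hki] at this
      have h2 : ψ₁ ∈ q jj ∧ (φ₁ ∈ q jj ∨ HyLTL.rel φ₁ ψ₁ ∈ q (jj + 1)) := hloc jj _ hj'
      exact ih2 jj h2.1
  exact main Φ 0 hinit.1

end Stmt7


namespace Stmt7

/-! ### Completeness -/

lemma complete {X A FC : Type} [Fintype A] (I : FC → FlowConstraint X) (Φ : HyLTL A FC)
    (hpos : Φ.Positive) (α : HybridTrace X A) (h : HyLTL.Sat I α Φ 0) :
    (theBHA I Φ).Accepts α := by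
  classical
  set Q : ℕ → Set (HyLTL A FC) := fun i => {χ | χ ∈ subf Φ ∧ HyLTL.Sat I α χ i} with hQ
  set o : ℕ → Option A := fun i => match i with
    | 0 => none
    | k + 1 => some (α.act k) with hO
  set j : ℕ → Fin ((usList Φ).length + 1) := fun i =>
    Nat.rec ⟨0, by omega⟩ (fun k jk => updC Φ (Q k) jk) i with hJ
  have hrec : ∀ n, j (n + 1) = updC Φ (Q n) (j n) := fun n => rfl
  set ℓ : ℕ → (theBHA I Φ).Loc := fun i => (⟨Q i, fun x hx => hx.1⟩, j i, o i) with hL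
  have hlocok : ∀ i, locok (Q i) (Q (i + 1)) (o i) := by
    intro i χ hχ
    obtain ⟨hsub, hsat⟩ := hχ
    cases χ with
    | flow f => trivial
    | act a =>
      obtain ⟨hpos', heq⟩ := hsat
      cases i with
      | zero => omega
      | succ k =>
        show some (α.act k) = some a
        simp only [Nat.add_sub_cancel] at heq
        rw [heq]
    | not ξ =>
      have hχpos : (HyLTL.not ξ).Positive := subf_positive hpos _ hsub
      obtain ⟨a, rfl⟩ := positive_not hχpos
      refine ⟨a, rfl, ?_⟩
      intro hcontra
      apply hsat
      cases i with
      | zero => cases hcontra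
      | succ k =>
        have : α.act k = a := Option.some_injective _ hcontra
        exact ⟨Nat.succ_pos k, by simpa using this⟩
    | and φ₁ ψ₁ =>
      exact ⟨⟨mem_subf_of_child hsub (by simp [subf, self_mem_subf]), hsat.1⟩,
        ⟨mem_subf_of_child hsub (by simp [subf, self_mem_subf]), hsat.2⟩⟩
    | or φ₁ ψ₁ =>
      rcases hsat with h' | h'
      · exact Or.inl ⟨mem_subf_of_child hsub (by simp [subf, self_mem_subf]), h'⟩
      · exact Or.inr ⟨mem_subf_of_child hsub (by simp [subf, self_mem_subf]), h'⟩
    | next φ₁ =>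
      exact ⟨mem_subf_of_child hsub (by simp [subf, self_mem_subf]), hsat⟩
    | untl φ₁ ψ₁ =>
      rcases untl_expand I α hsat with h' | ⟨h1, h2⟩
      · exact Or.inl ⟨mem_subf_of_child hsub (by simp [subf, self_mem_subf]), h'⟩
      · exact Or.inr ⟨⟨mem_subf_of_child hsub (by simp [subf, self_mem_subf]), h1⟩,
          ⟨hsub, h2⟩⟩
    | rel φ₁ ψ₁ =>
      obtain ⟨h1, h2⟩ := rel_expand I α hsat
      refine ⟨⟨mem_subf_of_child hsub (by simp [subf, self_mem_subf]), h1⟩, ?_⟩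
      rcases h2 with h2 | h2
      · exact Or.inl ⟨mem_subf_of_child hsub (by simp [subf, self_mem_subf]), h2⟩
      · exact Or.inr ⟨hsub, h2⟩
  have hconds : ∀ v (hv : v < (usList Φ).length), ∀ N, ∃ n, N ≤ n ∧
      cond ((usList Φ).get ⟨v, hv⟩) (Q n) := by
    intro v hv N
    have humem : (usList Φ).get ⟨v, hv⟩ ∈ usList Φ := List.get_mem _ _
    obtain ⟨husubf, huU⟩ := List.mem_filter.mp humem
    obtain ⟨φ₁, ψ₁, hu⟩ : ∃ φ₁ ψ₁, (usList Φ).get ⟨v, hv⟩ = HyLTL.untl φ₁ ψ₁ := by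
      rcases h' : (usList Φ).get ⟨v, hv⟩ with f | a | ξ | ⟨p, q⟩ | ⟨p, q⟩ | p | ⟨p, q⟩ | ⟨p, q⟩ <;>
        rw [h'] at huU <;> simp [isUntil] at huU
      exact ⟨p, q, rfl⟩
    rw [hu] at husubf ⊢
    by_cases hmem : HyLTL.untl φ₁ ψ₁ ∈ Q N
    · have hsat : HyLTL.Sat I α (.untl φ₁ ψ₁) N := hmem.2
      obtain ⟨jj, hNj, hψ, -⟩ := hsat
      refine ⟨jj, hNj, ?_⟩
      show HyLTL.untl φ₁ ψ₁ ∉ Q jj ∨ ψ₁ ∈ Q jj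
      exact Or.inr ⟨mem_subf_of_child husubf (by simp [subf, self_mem_subf]), hψ⟩
    · exact ⟨N, le_rfl, Or.inl hmem⟩
  have hio : ∀ N, ∃ n, N ≤ n ∧ (j n).val = (usList Φ).length :=
    reach Φ Q j hrec hconds
  -- pigeonhole for the Büchi condition
  haveI : Finite (theBHA I Φ).Loc := (theBHA I Φ).locFinite
  have hSinf : {n : ℕ | (j n).val = (usList Φ).length}.Infinite := by
    apply Set.infinite_of_not_bddAbove
    rintro ⟨b, hb⟩
    obtain ⟨n, hn1, hn2⟩ := hio (b + 1)
    have : n ≤ b := hb hn2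
    omega
  have hnf : ¬ ∀ l : (theBHA I Φ).Loc,
      {n | n ∈ {n : ℕ | (j n).val = (usList Φ).length} ∧ ℓ n = l}.Finite := by
    intro hall
    apply hSinf
    have hsub : {n : ℕ | (j n).val = (usList Φ).length} ⊆
        ⋃ l, {n | n ∈ {n : ℕ | (j n).val = (usList Φ).length} ∧ ℓ n = l} :=
      fun n hn => Set.mem_iUnion.mpr ⟨ℓ n, hn, rfl⟩
    exact Set.Finite.subset (Set.finite_iUnion hall) hsub
  obtain ⟨l, hl⟩ := not_forall.mp hnf
  have hlinf : {n | n ∈ {n : ℕ | (j n).val = (usList Φ).length} ∧ ℓ n = l}.Infinite := hl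
  refine ⟨ℓ, ⟨⟨self_mem_subf Φ, h⟩, rfl, rfl⟩, ?_, l, ?_, ?_⟩
  · intro i
    refine ⟨?_, ⟨hlocok i, rfl, rfl⟩, trivial⟩
    apply (dyn_iff I (α.traj i) (Q i)).mpr
    intro f hf
    exact hf.2
  · obtain ⟨n, hn⟩ := hlinf.nonempty
    have : (ℓ n).2.1.val = (usList Φ).length := hn.1
    rw [hn.2] at this
    exact this
  · intro N
    obtain ⟨n, hn, hgt⟩ := hlinf.exists_gt N
    exact ⟨n, by omega, hn.2⟩

end Stmt7


theorem stmt7 {X A FC : Type} [Fintype X] [Fintype A] [Fintype FC]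
    (I : FC → FlowConstraint X) (φ : HyLTL A FC) (hφ : φ.Positive) :
    ∃ H : BHA X A, ∀ α : HybridTrace X A,
      H.Accepts α ↔ HyLTL.Sat I α φ 0 := by
  exact ⟨Stmt7.theBHA I φ, fun α =>
    ⟨fun h => Stmt7.sound I φ α h, fun h => Stmt7.complete I φ hφ α h⟩⟩
end
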